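/- The subgroup $M$ of $\mathbb{Q}^\omega$ consisting of sequences all but finitely many of whose components lie in $\mathbb{Z}$ is not a divisible group; hence $M$ is not an injective $\mathbb{Z}$-module, even though it is an inverse limit of a countable system of injective $\mathbb{Z}$-modules with surjective transition maps. -/

import Mathlib

universe u v

/-- The first uncountable ordinal `ω₁`, as a linearly ordered index type. -/
def Omega1 : Type 1 := {o : Ordinal.{0} // o < (Cardinal.aleph 1).ord}

noncomputable instance : LinearOrder Omega1 := by unfold Omega1; infer_instance

/-- The inverse limit of an inverse system of modules, realized as the submodule of the
direct product consisting of the compatible families. -/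
def invLim {R : Type u} [Ring R] {ι : Type v} [Preorder ι] (P : ι → Type u)
    [∀ i, AddCommGroup (P i)] [∀ i, Module R (P i)]
    (φ : ∀ i j : ι, i ≤ j → (P j →ₗ[R] P i)) : Submodule R (∀ i, P i) where
  carrier := {x | ∀ (i j : ι) (h : i ≤ j), φ i j h (x j) = x i}
  zero_mem' := by intro i j h; simp
  add_mem' := by intro a b ha hb i j h; simp [ha i j h, hb i j h]
  smul_mem' := by intro c a ha i j h; simp [ha i j h]

/-- The subgroup of `ℚ^ω` of sequences all but finitely many of whose components are
integers. -/
def Msub : AddSubgroup (ℕ → ℚ) where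
  carrier := {x | {i | x i ∉ Set.range ((↑) : ℤ → ℚ)}.Finite}
  zero_mem' := by
    refine Set.finite_empty.subset ?_
    intro i hi
    exact hi ⟨0, by simp⟩
  add_mem' := by
    intro x y hx hy
    refine (hx.union hy).subset ?_
    intro i hi
    by_contra hc
    simp only [Set.mem_union, Set.mem_setOf_eq, not_or, not_not] at hc
    obtain ⟨⟨k, hk⟩, ⟨l, hl⟩⟩ := hc
    refine hi ⟨k + l, ?_⟩
    show ((k + l : ℤ) : ℚ) = x i + y i
    rw [Int.cast_add, hk, hl]
  neg_mem' := by
    intro x hx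
    refine hx.subset ?_
    intro i hi
    by_contra hc
    simp only [Set.mem_setOf_eq, not_not] at hc
    obtain ⟨k, hk⟩ := hc
    refine hi ⟨-k, ?_⟩
    show ((-k : ℤ) : ℚ) = -(x i)
    rw [Int.cast_neg, hk]



abbrev ZQ : Submodule ℤ ℚ := LinearMap.range (Algebra.linearMap ℤ ℚ)

lemma mkQ_eq_zero_iff' (q : ℚ) : ZQ.mkQ q = 0 ↔ q ∈ Set.range ((↑) : ℤ → ℚ) := by
  rw [Submodule.mkQ_apply, Submodule.Quotient.mk_eq_zero]
  constructor
  · rintro ⟨k, rfl⟩; exact ⟨k, by simp⟩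
  · rintro ⟨k, rfl⟩; exact ⟨k, by simp⟩

lemma QZ_surj (k : ℤ) (hk : k ≠ 0) : Function.Surjective (fun a : (ℚ ⧸ ZQ) => k • a) := by
  intro a
  obtain ⟨r, rfl⟩ := Submodule.mkQ_surjective ZQ a
  refine ⟨ZQ.mkQ ((k:ℚ)⁻¹ * r), ?_⟩
  show k • ZQ.mkQ _ = _
  rw [← map_zsmul]
  congr 1
  rw [zsmul_eq_mul, ← mul_assoc, mul_inv_cancel₀ (by exact_mod_cast hk), one_mul]

abbrev W : Type := (ℕ → ℚ) × (ℕ → ℚ ⧸ ZQ)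

def Pn (n : ℕ) : Submodule ℤ W where
  carrier := {p | (∀ i, n ≤ i → p.1 i = 0) ∧ (∀ i, i < n → p.2 i = 0) ∧
    (Function.support p.2).Finite}
  zero_mem' := ⟨fun _ _ => rfl, fun _ _ => rfl, by simp⟩
  add_mem' := by
    rintro a b ⟨ha1, ha2, ha3⟩ ⟨hb1, hb2, hb3⟩
    refine ⟨fun i hi => by show a.1 i + b.1 i = 0; rw [ha1 i hi, hb1 i hi, add_zero],
      fun i hi => by show a.2 i + b.2 i = 0; rw [ha2 i hi, hb2 i hi, add_zero],
      (ha3.union hb3).subset fun i hi => ?_⟩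
    by_contra hc
    simp only [Set.mem_union, Function.mem_support, not_or, not_not] at hc
    exact hi (by show a.2 i + b.2 i = 0; rw [hc.1, hc.2, add_zero])
  smul_mem' := by
    rintro c a ⟨h1, h2, h3⟩
    refine ⟨fun i hi => by show c • a.1 i = 0; rw [h1 i hi, smul_zero],
      fun i hi => by show c • a.2 i = 0; rw [h2 i hi, smul_zero],
      h3.subset fun i hi => ?_⟩
    simp only [Function.mem_support] at hi ⊢
    intro h0
    exact hi (by show c • a.2 i = 0; rw [h0, smul_zero])

/-- transition map on the ambient space -/
def T (m n : ℕ) : W →ₗ[ℤ] W where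
  toFun p := (fun i => if i < m then p.1 i else 0,
              fun i => if m ≤ i ∧ i < n then ZQ.mkQ (p.1 i) else p.2 i)
  map_add' a b := by
    refine Prod.ext (funext fun i => ?_) (funext fun i => ?_) <;> dsimp only
    · by_cases h : i < m <;> simp [h]
    · by_cases h : m ≤ i ∧ i < n <;> simp [h]
  map_smul' c a := by
    refine Prod.ext (funext fun i => ?_) (funext fun i => ?_) <;> dsimp only
    · by_cases h : i < m <;> simp [h]
    · by_cases h : m ≤ i ∧ i < n <;>
        simp [h, ← Submodule.Quotient.mk_smul, zsmul_eq_mul]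

lemma T_maps (m n : ℕ) (h : m ≤ n) : ∀ p ∈ Pn n, T m n p ∈ Pn m := by
  rintro p ⟨h1, h2, h3⟩
  refine ⟨fun i hi => if_neg (by omega), fun i hi => ?_, ?_⟩
  · dsimp [T]
    change (if m ≤ i ∧ i < n then ZQ.mkQ (p.1 i) else p.2 i) = 0
    rw [if_neg (by omega)]
    exact h2 i (lt_of_lt_of_le hi h)
  · refine ((Set.finite_Iio n).union h3).subset fun i hi => ?_
    simp only [Function.mem_support] at hi
    change (if m ≤ i ∧ i < n then ZQ.mkQ (p.1 i) else p.2 i) ≠ 0 at hi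
    by_contra hc
    simp only [Set.mem_union, Set.mem_Iio, not_or, not_lt, Function.mem_support,
      not_not] at hc
    obtain ⟨hni, hps⟩ := hc
    rw [if_neg (by omega)] at hi
    exact hi hps

def phi (m n : ℕ) (h : m ≤ n) : ↥(Pn n) →ₗ[ℤ] ↥(Pn m) :=
  (T m n).restrict (T_maps m n h)

lemma T_apply_fst (m n : ℕ) (p : W) (i : ℕ) :
    (T m n p).1 i = if i < m then p.1 i else 0 := rfl

lemma T_apply_snd (m n : ℕ) (p : W) (i : ℕ) :
    (T m n p).2 i = if m ≤ i ∧ i < n then ZQ.mkQ (p.1 i) else p.2 i := rfl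

lemma phi_apply (m n : ℕ) (h : m ≤ n) (x : ↥(Pn n)) :
    (phi m n h x : W) = T m n (x : W) := rfl

lemma phi_id (n : ℕ) : phi n n le_rfl = LinearMap.id := by
  refine LinearMap.ext fun x => Subtype.ext ?_
  show T n n (x : W) = (x : W)
  obtain ⟨p, h1, h2, h3⟩ := x
  refine Prod.ext (funext fun i => ?_) (funext fun i => ?_)
  · rw [T_apply_fst]
    by_cases h : i < n
    · rw [if_pos h]
    · rw [if_neg h, h1 i (not_lt.mp h)]
  · rw [T_apply_snd, if_neg (by omega)]

lemma phi_comp (m n p : ℕ) (hmn : m ≤ n) (hnp : n ≤ p) :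
    (phi m n hmn).comp (phi n p hnp) = phi m p (hmn.trans hnp) := by
  refine LinearMap.ext fun x => Subtype.ext ?_
  show (T m n (T n p (x : W))) = T m p (x : W)
  refine Prod.ext (funext fun i => ?_) (funext fun i => ?_)
  · rw [T_apply_fst, T_apply_fst, T_apply_fst]
    by_cases h : i < m
    · rw [if_pos h, if_pos h, if_pos (by omega)]
    · rw [if_neg h, if_neg h]
  · rw [T_apply_snd, T_apply_snd, T_apply_snd, T_apply_fst]
    by_cases h1 : m ≤ i ∧ i < n
    · rw [if_pos h1, if_pos (by omega), if_pos (by omega)]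
    · rw [if_neg h1]
      by_cases h2 : n ≤ i ∧ i < p
      · rw [if_pos h2, if_pos (by omega)]
      · rw [if_neg h2, if_neg (by omega)]

lemma Pn_smul_surj (n : ℕ) (k : ℤ) (hk : k ≠ 0) :
    Function.Surjective (fun a : ↥(Pn n) => k • a) := by
  rintro ⟨p, h1, h2, h3⟩
  classical
  refine ⟨⟨(fun i => (k : ℚ)⁻¹ * p.1 i,
      fun i => if h0 : p.2 i = 0 then 0 else (QZ_surj k hk (p.2 i)).choose),
      fun i hi => by simp [h1 i hi], fun i hi => by simp [h2 i hi], ?_⟩, ?_⟩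
  · refine h3.subset fun i hi => ?_
    simp only [Function.mem_support] at hi ⊢
    intro h0
    simp [h0] at hi
  · refine Subtype.ext (Prod.ext (funext fun i => ?_) (funext fun i => ?_))
    · show k • ((k : ℚ)⁻¹ * p.1 i) = p.1 i
      rw [zsmul_eq_mul, ← mul_assoc, mul_inv_cancel₀ (by exact_mod_cast hk), one_mul]
    · show k • (if h0 : p.2 i = 0 then 0 else (QZ_surj k hk (p.2 i)).choose) = p.2 i
      by_cases h0 : p.2 i = 0
      · simp [h0]
      · rw [dif_neg h0]
        exact (QZ_surj k hk (p.2 i)).choose_spec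

theorem injective_of_smul_surj (A : Type) [AddCommGroup A] [Module ℤ A]
    (h : ∀ k : ℤ, k ≠ 0 → Function.Surjective (fun a : A => k • a)) :
    Module.Injective ℤ A := by
  apply Module.Baer.injective
  intro I g
  rcases IsPrincipalIdealRing.principal I with ⟨m, rfl⟩
  obtain rfl | h0 := eq_or_ne m 0
  · refine ⟨0, fun n hn => ?_⟩
    rw [Submodule.span_zero_singleton] at hn
    subst hn
    simp only [LinearMap.zero_apply]
    exact ((congrArg g (Subtype.ext rfl : (⟨0, hn⟩ : ↥(Submodule.span ℤ ({0} : Set ℤ))) = 0)).trans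
      (map_zero g)).symm
  obtain ⟨c, hc0⟩ := h m h0 (g ⟨m, Submodule.subset_span rfl⟩)
  simp only at hc0
  have hc : m • c = g ⟨m, Submodule.subset_span rfl⟩ := hc0
  rw [← Int.cast_smul_eq_zsmul ℤ, Int.cast_id] at hc
  refine ⟨LinearMap.toSpanSingleton ℤ A c, fun x hx => ?_⟩
  rcases Submodule.mem_span_singleton.mp hx with ⟨r, rfl⟩
  conv_lhs => rw [LinearMap.toSpanSingleton_apply, smul_eq_mul, @mul_smul ℤ A _ (Module.toDistribMulAction (R := ℤ) (M := A)).toMulAction.toSemigroupAction r m c]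
  rw [hc, ← LinearMap.map_smul]
  exact congrArg g (Subtype.ext (by simp))

lemma Pn_injective (n : ℕ) : Module.Injective ℤ ↥(Pn n) :=
  injective_of_smul_surj _ (Pn_smul_surj n)

lemma phi_surj (m n : ℕ) (h : m ≤ n) : Function.Surjective (phi m n h) := by
  rintro ⟨p, h1, h2, h3⟩
  classical
  refine ⟨⟨(fun i => if i < m then p.1 i else if i < n then
      (Submodule.mkQ_surjective ZQ (p.2 i)).choose else 0,
      fun i => if i < n then 0 else p.2 i),
      fun i hi => by dsimp only; rw [if_neg (by omega), if_neg (by omega)],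
      fun i hi => by dsimp only; rw [if_pos hi],
      h3.subset fun i hi => ?_⟩, Subtype.ext ?_⟩
  · simp only [Function.mem_support] at hi ⊢
    by_cases hc : i < n
    · rw [if_pos hc] at hi; exact absurd rfl hi
    · rwa [if_neg hc] at hi
  · refine Prod.ext (funext fun i => ?_) (funext fun i => ?_)
    · rw [phi_apply, T_apply_fst]
      dsimp only
      by_cases hc : i < m
      · rw [if_pos hc, if_pos hc]
      · rw [if_neg hc, h1 i (by omega)]
    · rw [phi_apply, T_apply_snd]
      dsimp only
      by_cases hc : m ≤ i ∧ i < n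
      · rw [if_pos hc, if_neg (by omega), if_pos hc.2]
        exact (Submodule.mkQ_surjective ZQ (p.2 i)).choose_spec
      · rw [if_neg hc]
        by_cases hc2 : i < n
        · rw [if_pos hc2, h2 i (by omega)]
        · rw [if_neg hc2]

def yfun (x : ℕ → ℚ) (n : ℕ) : W :=
  (fun i => if i < n then x i else 0, fun i => if n ≤ i then ZQ.mkQ (x i) else 0)

lemma yfun_mem (x : ℕ → ℚ) (hx : x ∈ Msub) (n : ℕ) : yfun x n ∈ Pn n := by
  have hx' : {i | x i ∉ Set.range ((↑) : ℤ → ℚ)}.Finite := hx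
  refine ⟨fun i hi => if_neg (by omega), fun i hi => if_neg (by omega), ?_⟩
  refine hx'.subset fun i hi => ?_
  simp only [Function.mem_support, yfun] at hi
  by_contra hc
  simp only [Set.mem_setOf_eq, not_not] at hc
  apply hi
  by_cases h : n ≤ i
  · rw [if_pos h, mkQ_eq_zero_iff']
    exact hc
  · rw [if_neg h]

lemma yfun_compat (x : ℕ → ℚ) (m n : ℕ) (h : m ≤ n) : T m n (yfun x n) = yfun x m := by
  refine Prod.ext (funext fun i => ?_) (funext fun i => ?_)
  · rw [T_apply_fst]
    dsimp only [yfun]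
    by_cases hc : i < m
    · rw [if_pos hc, if_pos (show i < n from by omega), if_pos hc]
    · rw [if_neg hc, if_neg hc]
  · rw [T_apply_snd]
    dsimp only [yfun]
    by_cases hc : m ≤ i ∧ i < n
    · rw [if_pos hc, if_pos hc.2, if_pos hc.1]
    · rw [if_neg hc]
      by_cases hc2 : n ≤ i
      · rw [if_pos hc2, if_pos (show m ≤ i from by omega)]
      · rw [if_neg hc2, if_neg (show ¬ m ≤ i from by omega)]

lemma yfun_add (x y : ℕ → ℚ) (n : ℕ) : yfun (x + y) n = yfun x n + yfun y n := by
  refine Prod.ext (funext fun i => ?_) (funext fun i => ?_) <;> dsimp only [yfun] <;>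
    by_cases hc : i < n <;> by_cases hc2 : n ≤ i <;> simp [hc, hc2]

lemma yfun_smul (c : ℤ) (x : ℕ → ℚ) (n : ℕ) : yfun (c • x) n = c • yfun x n := by
  refine Prod.ext (funext fun i => ?_) (funext fun i => ?_) <;> dsimp only [yfun] <;>
    by_cases hc : i < n <;> by_cases hc2 : n ≤ i <;>
      simp [hc, hc2, ← Submodule.Quotient.mk_smul, zsmul_eq_mul]

lemma Msub_coe_smul (c : ℤ) (x : ↥Msub) : ((c • x : ↥Msub) : ℕ → ℚ) = c • (x : ℕ → ℚ) := rfl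

def toLim : ↥Msub →ₗ[ℤ] ↥(invLim (fun n => ↥(Pn n)) phi) where
  toFun x := ⟨fun n => ⟨yfun (x : ℕ → ℚ) n, yfun_mem _ x.2 n⟩,
    fun m n h => Subtype.ext (yfun_compat _ m n h)⟩
  map_add' a b := Subtype.ext (funext fun n => Subtype.ext (by
    show yfun (((a + b : ↥Msub)) : ℕ → ℚ) n = yfun (a : ℕ → ℚ) n + yfun (b : ℕ → ℚ) n
    rw [show ((a + b : ↥Msub) : ℕ → ℚ) = (a : ℕ → ℚ) + (b : ℕ → ℚ) from rfl, yfun_add]))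
  map_smul' c a := Subtype.ext (funext fun n => Subtype.ext (by
    show yfun (((c • a : ↥Msub)) : ℕ → ℚ) n = c • yfun (a : ℕ → ℚ) n
    rw [Msub_coe_smul, yfun_smul]))

lemma toLim_bij : Function.Bijective toLim := by
  constructor
  · intro a b hab
    have h0 := Subtype.ext_iff.mp hab
    refine Subtype.ext (funext fun i => ?_)
    have h1 := Subtype.ext_iff.mp (congrFun h0 (i + 1))
    have h2 := congrFun (congrArg Prod.fst h1) i
    simp only [toLim, LinearMap.coe_mk, AddHom.coe_mk, yfun] at h2
    rwa [if_pos (by omega), if_pos (by omega)] at h2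
  · rintro ⟨y, hy⟩
    set x : ℕ → ℚ := fun i => ((y (i + 1) : ↥(Pn (i + 1))) : W).1 i with hxdef
    have key1 : ∀ n i, i < n → ((y n : ↥(Pn n)) : W).1 i = x i := by
      intro n i hi
      have h := congrArg Subtype.val (hy (i + 1) n (by omega))
      have h1 := congrFun (congrArg Prod.fst h) i
      rw [phi_apply, T_apply_fst, if_pos (by omega)] at h1
      rw [hxdef]
      change (↑(y n) : W).1 i = (↑(y (i + 1)) : W).1 i
      exact h1
    have key2 : ∀ n i, n ≤ i → ((y n : ↥(Pn n)) : W).2 i = ZQ.mkQ (x i) := by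
      intro n i hi
      have h := congrArg Subtype.val (hy n (i + 1) (by omega))
      have h1 := congrFun (congrArg Prod.snd h) i
      rw [phi_apply, T_apply_snd, if_pos ⟨hi, by omega⟩, key1 (i + 1) i (by omega)] at h1
      exact h1.symm
    have hxmem : x ∈ Msub := by
      show {i | x i ∉ Set.range ((↑) : ℤ → ℚ)}.Finite
      have hfin := (y 0).2.2.2
      refine hfin.subset fun i hi => ?_
      simp only [Set.mem_setOf_eq] at hi
      simp only [Function.mem_support]
      rw [key2 0 i (by omega)]
      intro h0
      exact hi ((mkQ_eq_zero_iff' (x i)).mp h0)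
    refine ⟨⟨x, hxmem⟩, Subtype.ext (funext fun n => Subtype.ext ?_)⟩
    show yfun x n = ((y n : ↥(Pn n)) : W)
    refine Prod.ext (funext fun i => ?_) (funext fun i => ?_) <;> dsimp only [yfun]
    · by_cases hc : i < n
      · rw [if_pos hc, key1 n i hc]
      · rw [if_neg hc, (y n).2.1 i (by omega)]
    · by_cases hc : n ≤ i
      · rw [if_pos hc, key2 n i hc]
      · rw [if_neg hc, (y n).2.2.1 i (by omega)]
/-- The group `M` of sequences of rationals, all but finitely many of whose components
are integers, is not divisible, hence not an injective `ℤ`-module — even though it is the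
inverse limit of a countable system of injective `ℤ`-modules with surjective transition
maps. -/
theorem Msub_not_divisible :
    ¬ (∀ k : ℤ, k ≠ 0 → Function.Surjective (fun x : ↥Msub => k • x)) ∧
    ¬ Module.Injective ℤ ↥Msub ∧
    ∃ (P : ℕ → Type) (_ : ∀ n, AddCommGroup (P n))
      (φ : ∀ m n : ℕ, m ≤ n → (P n →ₗ[ℤ] P m)),
      (∀ n, φ n n le_rfl = LinearMap.id) ∧
      (∀ (m n p : ℕ) (hmn : m ≤ n) (hnp : n ≤ p),
        (φ m n hmn).comp (φ n p hnp) = φ m p (hmn.trans hnp)) ∧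
      (∀ n, Module.Injective ℤ (P n)) ∧
      (∀ (m n : ℕ) (h : m ≤ n), Function.Surjective (φ m n h)) ∧
      Nonempty (↥Msub ≃ₗ[ℤ] ↥(invLim P φ)) := by
  have notdiv : ¬ (∀ k : ℤ, k ≠ 0 → Function.Surjective (fun x : ↥Msub => k • x)) := by
    intro hdiv
    have hmem : (fun _ : ℕ => (1 : ℚ)) ∈ Msub := by
      show {i | (1 : ℚ) ∉ Set.range ((↑) : ℤ → ℚ)}.Finite
      refine Set.finite_empty.subset fun i hi => ?_
      exact hi ⟨1, by norm_num⟩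
    obtain ⟨z, hz⟩ := hdiv 2 (by norm_num) ⟨fun _ => 1, hmem⟩
    have hz' : ∀ i, (2 : ℤ) • ((z : ℕ → ℚ) i) = 1 := by
      intro i
      have h := congrFun (congrArg (Subtype.val) hz) i
      rw [show ((((2 : ℤ) • z : ↥Msub)) : ℕ → ℚ) = (2 : ℤ) • (z : ℕ → ℚ) from rfl] at h
      exact h
    have hznot : ∀ i, (z : ℕ → ℚ) i ∉ Set.range ((↑) : ℤ → ℚ) := by
      rintro i ⟨k, hk⟩
      have h := hz' i
      rw [← hk, zsmul_eq_mul] at h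
      have : ((2 * k : ℤ) : ℚ) = ((1 : ℤ) : ℚ) := by push_cast; exact h
      have := Int.cast_injective this
      omega
    have hfin : {i | (z : ℕ → ℚ) i ∉ Set.range ((↑) : ℤ → ℚ)}.Finite := z.2
    rw [show {i | (z : ℕ → ℚ) i ∉ Set.range ((↑) : ℤ → ℚ)} = Set.univ from
      Set.eq_univ_of_forall hznot] at hfin
    exact Set.infinite_univ hfin
  refine ⟨notdiv, ?_, ?_⟩
  · intro hinj
    refine notdiv fun k hk m => ?_
    obtain ⟨g, hg⟩ := hinj.out (LinearMap.toSpanSingleton ℤ ℤ k)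
      (by intro a b hab
          simp only [LinearMap.toSpanSingleton_apply, smul_eq_mul] at hab
          exact mul_right_cancel₀ hk hab)
      (LinearMap.toSpanSingleton ℤ (↥Msub) m)
    refine ⟨g 1, ?_⟩
    have h1 := hg 1
    simp only [LinearMap.toSpanSingleton_apply, one_smul] at h1
    show k • g 1 = m
    rw [← map_smul, smul_eq_mul, mul_one, h1]
  · exact ⟨fun n => ↥(Pn n), fun n => inferInstance, phi, phi_id, phi_comp,
      Pn_injective, phi_surj, ⟨LinearEquiv.ofBijective toLim toLim_bij⟩⟩
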